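/- In the class-segregated buffer model with n queues of arbitrary capacities B_1,...,B_n, each assigned one of m nonnegative packet values v_1 < ... < v_m, the algorithm GREEDY (which accepts every arriving packet whose destination queue is not full, and at every send event transmits a packet from a non-empty queue of the highest value) is 2-competitive: for every input sequence σ, OPT(σ) ≤ 2 · GREEDY(σ), where OPT(σ) is the maximum benefit over all feasible diligent schedules for σ. -/

import Mathlib

/-!
Model of class-segregated buffer management (Al-Bawani, Souza).

A switch has `n` queues and `m` packet values `val : Fin m → ℝ`; queue `q` is
assigned value index `qval q` and has capacity `cap q`.  An input sequence is a
list of events: an `arrive q` event (a packet destined to queue `q`) or a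
`send` event.  A (diligent) schedule is given by its decisions at send events,
`dec : ℕ → Option (Fin n)` (decision for the `k`-th send event): acceptance is
forced (accept iff the destination queue is not full), at a send event the
schedule transmits one packet from the chosen non-empty queue, and it may
choose `none` only if all queues are empty.  `run` simulates the schedule,
tracking queue contents, the number of accepted packets of each value, and the
number of transmitted packets of each value.  `Feasible` expresses diligence,
and `GreedyFeasible` additionally requires that every transmitted packet has
the highest value among non-empty queues (ties broken arbitrarily).
`benefit` is the total value of transmitted packets.
-/

namespace BufferModel

inductive BEvent (n : ℕ) : Type where
  | arrive (q : Fin n) : BEvent n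
  | send : BEvent n
deriving DecidableEq

/-- `queue q` = number of packets currently in queue `q`; `acc i` = number of
packets of value index `i` accepted so far; `trans i` = number of packets of
value index `i` transmitted so far. -/
structure BState (n m : ℕ) where
  queue : Fin n → ℕ
  acc : Fin m → ℕ
  trans : Fin m → ℕ

def initState (n m : ℕ) : BState n m :=
  ⟨fun _ => 0, fun _ => 0, fun _ => 0⟩

/-- Diligent processing of an arrive event at queue `q`: accept iff there is room. -/
def arriveStep {n m : ℕ} (cap : Fin n → ℕ) (qval : Fin n → Fin m)
    (s : BState n m) (q : Fin n) : BState n m :=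
  if s.queue q < cap q then
    { queue := Function.update s.queue q (s.queue q + 1)
      acc := Function.update s.acc (qval q) (s.acc (qval q) + 1)
      trans := s.trans }
  else s

/-- Processing of a send event with decision `d`. -/
def sendStep {n m : ℕ} (qval : Fin n → Fin m) (s : BState n m)
    (d : Option (Fin n)) : BState n m :=
  match d with
  | some q =>
      if 0 < s.queue q then
        { queue := Function.update s.queue q (s.queue q - 1)
          acc := s.acc
          trans := Function.update s.trans (qval q) (s.trans (qval q) + 1) }
      else s
  | none => s

/-- Simulate the schedule with send-decisions `dec` on an event list, starting
with send-counter `k` and state `s`. -/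
def run {n m : ℕ} (cap : Fin n → ℕ) (qval : Fin n → Fin m)
    (dec : ℕ → Option (Fin n)) :
    List (BEvent n) → ℕ → BState n m → BState n m
  | [], _, s => s
  | BEvent.arrive q :: es, k, s => run cap qval dec es k (arriveStep cap qval s q)
  | BEvent.send :: es, k, s => run cap qval dec es (k + 1) (sendStep qval s (dec k))

/-- The schedule `dec` is feasible (diligent): at each send event it transmits
from a non-empty queue, and it stays idle only if all queues are empty. -/
def Feasible {n m : ℕ} (cap : Fin n → ℕ) (qval : Fin n → Fin m)
    (dec : ℕ → Option (Fin n)) :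
    List (BEvent n) → ℕ → BState n m → Prop
  | [], _, _ => True
  | BEvent.arrive q :: es, k, s => Feasible cap qval dec es k (arriveStep cap qval s q)
  | BEvent.send :: es, k, s =>
      (match dec k with
       | some q => 0 < s.queue q
       | none => ∀ q, s.queue q = 0) ∧
      Feasible cap qval dec es (k + 1) (sendStep qval s (dec k))

/-- The schedule `dec` is a GREEDY schedule: feasible, and at every send event
it transmits a packet from a non-empty queue of the highest value. -/
def GreedyFeasible {n m : ℕ} (val : Fin m → ℝ) (cap : Fin n → ℕ)
    (qval : Fin n → Fin m) (dec : ℕ → Option (Fin n)) :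
    List (BEvent n) → ℕ → BState n m → Prop
  | [], _, _ => True
  | BEvent.arrive q :: es, k, s =>
      GreedyFeasible val cap qval dec es k (arriveStep cap qval s q)
  | BEvent.send :: es, k, s =>
      (match dec k with
       | some q => 0 < s.queue q ∧
           ∀ q', 0 < s.queue q' → val (qval q') ≤ val (qval q)
       | none => ∀ q, s.queue q = 0) ∧
      GreedyFeasible val cap qval dec es (k + 1) (sendStep qval s (dec k))

/-- Benefit of a schedule: total value of the transmitted packets. -/
def benefit {n m : ℕ} (val : Fin m → ℝ) (s : BState n m) : ℝ :=
  ∑ i, val i * (s.trans i : ℝ)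

end BufferModel

namespace BufferModel

private lemma sum_one_point {α : Type*} [Fintype α] [DecidableEq α] (f f' : α → ℝ) (a : α)
    (h : ∀ x, x ≠ a → f' x = f x) :
    ∑ x, f' x = ∑ x, f x + (f' a - f a) := by
  have hf : f' = Function.update f a (f' a) := by
    funext x
    rcases eq_or_ne x a with rfl | hx
    · simp
    · simp [Function.update_of_ne hx, h x hx]
  rw [hf, Finset.sum_update_of_mem (Finset.mem_univ a), ← Finset.erase_eq,
      Finset.sum_erase_eq_sub (Finset.mem_univ a), Function.update_self]
  ring

private lemma sum_two_point {α : Type*} [Fintype α] [DecidableEq α] (f f' : α → ℝ) (a b : α)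
    (hab : a ≠ b) (h : ∀ x, x ≠ a → x ≠ b → f' x = f x) :
    ∑ x, f' x = ∑ x, f x + (f' a - f a) + (f' b - f b) := by
  have h1 : ∑ x, f' x = ∑ x, (Function.update f a (f' a)) x + (f' b - Function.update f a (f' a) b) :=
    sum_one_point (Function.update f a (f' a)) f' b (fun x hxb => by
      rcases eq_or_ne x a with rfl | hxa
      · simp
      · simp [Function.update_of_ne hxa, h x hxa hxb])
  rw [h1, sum_one_point f (Function.update f a (f' a)) a
      (fun x hx => Function.update_of_ne hx _ _),
      Function.update_self, Function.update_of_ne hab.symm]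
  try ring

/-- Potential: value of packets present in `sd`'s queues in excess of `sg`'s queues. -/
def phi {n m : ℕ} (v : Fin m → ℝ) (qval : Fin n → Fin m) (sd sg : BState n m) : ℝ :=
  ∑ q, v (qval q) * ((sd.queue q - sg.queue q : ℕ) : ℝ)

lemma phi_nonneg {n m : ℕ} (v : Fin m → ℝ) (hv : ∀ i, 0 ≤ v i) (qval : Fin n → Fin m)
    (sd sg : BState n m) : 0 ≤ phi v qval sd sg :=
  Finset.sum_nonneg fun q _ => mul_nonneg (hv _) (Nat.cast_nonneg _)

lemma benefit_arriveStep {n m : ℕ} (v : Fin m → ℝ) (cap : Fin n → ℕ) (qval : Fin n → Fin m)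
    (s : BState n m) (q : Fin n) :
    benefit v (arriveStep cap qval s q) = benefit v s := by
  unfold arriveStep
  split <;> rfl

lemma phi_arrive_le {n m : ℕ} (v : Fin m → ℝ) (hv : ∀ i, 0 ≤ v i) (cap : Fin n → ℕ)
    (qval : Fin n → Fin m) (sd sg : BState n m) (q : Fin n) :
    phi v qval (arriveStep cap qval sd q) (arriveStep cap qval sg q) ≤ phi v qval sd sg := by
  unfold phi
  rw [sum_one_point
      (fun x => v (qval x) * ((sd.queue x - sg.queue x : ℕ) : ℝ))
      (fun x => v (qval x) *
        (((arriveStep cap qval sd q).queue x - (arriveStep cap qval sg q).queue x : ℕ) : ℝ))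
      q
      (fun x hx => by
        unfold arriveStep
        split <;> split <;> first
          | rfl
          | simp [Function.update_of_ne hx])]
  have hle : ((arriveStep cap qval sd q).queue q - (arriveStep cap qval sg q).queue q : ℕ)
      ≤ (sd.queue q - sg.queue q : ℕ) := by
    unfold arriveStep
    split <;> split <;> rename_i h1 h2 <;> (try simp only [Function.update_self]) <;> omega
  have := mul_le_mul_of_nonneg_left (show
      (((arriveStep cap qval sd q).queue q - (arriveStep cap qval sg q).queue q : ℕ) : ℝ)
        ≤ ((sd.queue q - sg.queue q : ℕ) : ℝ) from Nat.cast_le.mpr hle) (hv (qval q))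
  linarith

lemma sendStep_some_pos {n m : ℕ} (qval : Fin n → Fin m) (s : BState n m) (q : Fin n)
    (hq : 0 < s.queue q) :
    sendStep qval s (some q) =
      { queue := Function.update s.queue q (s.queue q - 1)
        acc := s.acc
        trans := Function.update s.trans (qval q) (s.trans (qval q) + 1) } :=
  if_pos hq

lemma sendStep_none {n m : ℕ} (qval : Fin n → Fin m) (s : BState n m) :
    sendStep qval s none = s := rfl

lemma benefit_sendStep_some {n m : ℕ} (v : Fin m → ℝ) (qval : Fin n → Fin m)
    (s : BState n m) (q : Fin n) (hq : 0 < s.queue q) :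
    benefit v (sendStep qval s (some q)) = benefit v s + v (qval q) := by
  rw [sendStep_some_pos qval s q hq]
  unfold benefit
  rw [sum_one_point (fun i => v i * (s.trans i : ℝ))
      (fun i => v i * ((Function.update s.trans (qval q) (s.trans (qval q) + 1)) i : ℝ))
      (qval q) (fun i hi => by simp [Function.update_of_ne hi])]
  simp only [Function.update_self]
  push_cast
  ring

lemma send_inv {n m : ℕ} (v : Fin m → ℝ) (hv : ∀ i, 0 ≤ v i) (qval : Fin n → Fin m)
    (sd sg : BState n m) (dd dg : Option (Fin n))
    (hd : match dd with
          | some q => 0 < sd.queue q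
          | none => ∀ q, sd.queue q = 0)
    (hg : match dg with
          | some q => 0 < sg.queue q ∧ ∀ q', 0 < sg.queue q' → v (qval q') ≤ v (qval q)
          | none => ∀ q, sg.queue q = 0)
    (h : benefit v sd + phi v qval sd sg ≤ 2 * benefit v sg) :
    benefit v (sendStep qval sd dd) + phi v qval (sendStep qval sd dd) (sendStep qval sg dg)
      ≤ 2 * benefit v (sendStep qval sg dg) := by
  rcases dd with _ | q
  · rcases dg with _ | q'
    · exact h
    · -- d idle, g sends from q'
      obtain ⟨hq', hmax⟩ := hg
      have hsd : sendStep qval sd none = sd := rfl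
      have hbg := benefit_sendStep_some v qval sg q' hq'
      have hphi : phi v qval sd (sendStep qval sg (some q'))  = phi v qval sd sg := by
        unfold phi
        refine Finset.sum_congr rfl fun x _ => ?_
        rcases eq_or_ne x q' with rfl | hx
        · have h0 : sd.queue x = 0 := hd x
          rw [sendStep_some_pos qval sg x hq']
          simp [h0]
        · rw [sendStep_some_pos qval sg q' hq']
          simp [Function.update_of_ne hx]
      rw [hsd, hphi, hbg]
      have := hv (qval q')
      linarith
  · rcases dg with _ | q'
    · -- d sends from q, g idle
      have hq : 0 < sd.queue q := hd
      have hsg : sendStep qval sg none = sg := rfl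
      have hbd := benefit_sendStep_some v qval sd q hq
      have hg0 : sg.queue q = 0 := hg q
      have hphi : phi v qval (sendStep qval sd (some q)) sg
          = phi v qval sd sg - v (qval q) := by
        unfold phi
        rw [sum_one_point
            (fun x => v (qval x) * ((sd.queue x - sg.queue x : ℕ) : ℝ))
            (fun x => v (qval x) *
              (((sendStep qval sd (some q)).queue x - sg.queue x : ℕ) : ℝ))
            q
            (fun x hx => by
              rw [sendStep_some_pos qval sd q hq]
              simp [Function.update_of_ne hx])]
        have e1 : ((sendStep qval sd (some q)).queue q - sg.queue q : ℕ)
            = (sd.queue q - sg.queue q : ℕ) - 1 := by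
          rw [sendStep_some_pos qval sd q hq]
          simp only [Function.update_self]
          omega
        rw [e1]
        have e2 : (((sd.queue q - sg.queue q : ℕ) - 1 : ℕ) : ℝ)
            = ((sd.queue q - sg.queue q : ℕ) : ℝ) - 1 := by
          have : 1 ≤ (sd.queue q - sg.queue q : ℕ) := by omega
          push_cast [Nat.cast_sub this]
          ring
        rw [e2]
        ring
      rw [hsg, hbd, hphi]
      linarith
    · -- both send
      obtain ⟨hq', hmax⟩ := hg
      have hq : 0 < sd.queue q := hd
      have hbd := benefit_sendStep_some v qval sd q hq
      have hbg := benefit_sendStep_some v qval sg q' hq'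
      rcases eq_or_ne q q' with rfl | hqq
      · -- same queue
        have hphi : phi v qval (sendStep qval sd (some q)) (sendStep qval sg (some q))
            = phi v qval sd sg := by
          unfold phi
          refine Finset.sum_congr rfl fun x _ => ?_
          rcases eq_or_ne x q with rfl | hx
          · rw [sendStep_some_pos qval sd x hq, sendStep_some_pos qval sg x hq']
            simp only [Function.update_self]
            congr 2
            omega
          · rw [sendStep_some_pos qval sd q hq, sendStep_some_pos qval sg q hq']
            simp [Function.update_of_ne hx]
        rw [hbd, hbg, hphi]
        have := hv (qval q)
        linarith
      · -- different queues
        set a := sd.queue q with ha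
        set b := sg.queue q with hb
        set c := sd.queue q' with hc
        set e := sg.queue q' with he
        have hphi : phi v qval (sendStep qval sd (some q)) (sendStep qval sg (some q'))
            = phi v qval sd sg
              + (v (qval q) * (((a - 1) - b : ℕ) : ℝ) - v (qval q) * ((a - b : ℕ) : ℝ))
              + (v (qval q') * ((c - (e - 1) : ℕ) : ℝ) - v (qval q') * ((c - e : ℕ) : ℝ)) := by
          unfold phi
          rw [sum_two_point
              (fun x => v (qval x) * ((sd.queue x - sg.queue x : ℕ) : ℝ))
              (fun x => v (qval x) *
                (((sendStep qval sd (some q)).queue x - (sendStep qval sg (some q')).queue x : ℕ) : ℝ))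
              q q' hqq
              (fun x hx hx' => by
                rw [sendStep_some_pos qval sd q hq, sendStep_some_pos qval sg q' hq']
                simp [Function.update_of_ne hx, Function.update_of_ne hx'])]
          have e1 : (sendStep qval sd (some q)).queue q = a - 1 := by
            rw [sendStep_some_pos qval sd q hq]; simp [ha]
          have e2 : (sendStep qval sg (some q')).queue q = b := by
            rw [sendStep_some_pos qval sg q' hq']; simp [Function.update_of_ne hqq, hb]
          have e3 : (sendStep qval sd (some q)).queue q' = c := by
            rw [sendStep_some_pos qval sd q hq]; simp [Function.update_of_ne (Ne.symm hqq), hc]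
          have e4 : (sendStep qval sg (some q')).queue q' = e - 1 := by
            rw [sendStep_some_pos qval sg q' hq']; simp [he]
          rw [e1, e2, e3, e4]
        rw [hbd, hbg, hphi]
        have hs1 : ((c - (e - 1) : ℕ) : ℝ) ≤ ((c - e : ℕ) : ℝ) + 1 := by
          have : (c - (e - 1) : ℕ) ≤ (c - e : ℕ) + 1 := by omega
          exact_mod_cast this
        have hvq := hv (qval q)
        have hvq' := hv (qval q')
        have hB : v (qval q') * ((c - (e - 1) : ℕ) : ℝ) - v (qval q') * ((c - e : ℕ) : ℝ)
            ≤ v (qval q') := by nlinarith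
        rcases Nat.eq_zero_or_pos b with hb0 | hbpos
        · -- g's queue q is empty: the q-term drops by exactly v (qval q)
          have ht : (((a - 1) - b : ℕ) : ℝ) = ((a - b : ℕ) : ℝ) - 1 := by
            have h1 : ((a - 1) - b : ℕ) + 1 = (a - b : ℕ) := by omega
            have := congrArg (fun t : ℕ => (t : ℝ)) h1
            push_cast at this
            linarith
          rw [ht]
          nlinarith
        · -- g's queue q nonempty: greedy gives v (qval q) ≤ v (qval q')
          have hle : v (qval q) ≤ v (qval q') := hmax q hbpos
          have ht : (((a - 1) - b : ℕ) : ℝ) ≤ ((a - b : ℕ) : ℝ) := by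
            have : ((a - 1) - b : ℕ) ≤ (a - b : ℕ) := by omega
            exact_mod_cast this
          nlinarith

lemma key_inv {n m : ℕ} (v : Fin m → ℝ) (hv : ∀ i, 0 ≤ v i) (cap : Fin n → ℕ)
    (qval : Fin n → Fin m) (d g : ℕ → Option (Fin n)) :
    ∀ (es : List (BEvent n)) (k : ℕ) (sd sg : BState n m),
      Feasible cap qval d es k sd →
      GreedyFeasible v cap qval g es k sg →
      benefit v sd + phi v qval sd sg ≤ 2 * benefit v sg →
      benefit v (run cap qval d es k sd)
          + phi v qval (run cap qval d es k sd) (run cap qval g es k sg)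
        ≤ 2 * benefit v (run cap qval g es k sg)
  | [], _, _, _, _, _, h => h
  | BEvent.arrive q :: es, k, sd, sg, hd, hg, h =>
      key_inv v hv cap qval d g es k _ _ hd hg (by
        rw [benefit_arriveStep, benefit_arriveStep]
        have := phi_arrive_le v hv cap qval sd sg q
        linarith)
  | BEvent.send :: es, k, sd, sg, hd, hg, h =>
      key_inv v hv cap qval d g es (k + 1) _ _ hd.2 hg.2
        (send_inv v hv qval sd sg (d k) (g k) hd.1 hg.1 h)

end BufferModel

namespace BufferModel

/-- In the class-segregated buffer model with `n` queues of
arbitrary capacities, each assigned one of `m` nonnegative packet values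
`v 0 < ... < v (m-1)`, GREEDY is 2-competitive: for every input sequence `σ`,
the benefit of any feasible diligent schedule `d` (in particular of an optimal
one) is at most twice the benefit of any GREEDY schedule `g`. -/
theorem greedy_is_two_competitive
    (n m : ℕ) (v : Fin m → ℝ) (hv : ∀ i, 0 ≤ v i) (hmono : StrictMono v)
    (cap : Fin n → ℕ) (qval : Fin n → Fin m)
    (σ : List (BEvent n)) (g d : ℕ → Option (Fin n))
    (hg : GreedyFeasible v cap qval g σ 0 (initState n m))
    (hd : Feasible cap qval d σ 0 (initState n m)) :
    benefit v (run cap qval d σ 0 (initState n m)) ≤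
      2 * benefit v (run cap qval g σ 0 (initState n m)) := by
  have h0 : benefit v (initState n m) + phi v qval (initState n m) (initState n m)
      ≤ 2 * benefit v (initState n m) := by
    simp [benefit, phi, initState]
  have hkey := key_inv v hv cap qval d g σ 0 _ _ hd hg h0
  have hp := phi_nonneg v hv qval (run cap qval d σ 0 (initState n m))
      (run cap qval g σ 0 (initState n m))
  linarith

end BufferModel
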